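/- Let X and Y be partially ordered sets and let φ : X → Y be an order embedding. Then the restriction of φ^# to the cuts of X is an order isomorphic embedding into the cuts of Y, with both ordered by inclusion: for all cuts A, B of X, A ⊆ B if and only if φ^#(A) ⊆ φ^#(B), and φ^# is injective on cuts of X. -/

import Mathlib

/-- `ul A = (A^u)^l`: the lower bounds of the set of upper bounds of `A`. -/
def ul {X : Type*} [PartialOrder X] (A : Set X) : Set X :=
  lowerBounds (upperBounds A)

/-- `A` is a cut if `A^{ul} = A`. -/
def IsCut {X : Type*} [PartialOrder X] (A : Set X) : Prop :=
  ul A = A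

/-- `φ^#(A) = (φ(A))^{ul}`. -/
def sharp {X Y : Type*} [PartialOrder X] [PartialOrder Y] (φ : X → Y) (A : Set X) : Set Y :=
  ul (φ '' A)
theorem stmt15 {X Y : Type*} [PartialOrder X] [PartialOrder Y] (φ : X → Y)
    (hφ : ∀ a b : X, φ a ≤ φ b ↔ a ≤ b) :
    (∀ A B : Set X, IsCut A → IsCut B → (A ⊆ B ↔ sharp φ A ⊆ sharp φ B)) ∧
      Set.InjOn (sharp φ) {A : Set X | IsCut A} := by
  have key : ∀ A B : Set X, IsCut A → IsCut B → (A ⊆ B ↔ sharp φ A ⊆ sharp φ B) := by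
    intro A B hA hB
    constructor
    · intro hAB y hy
      intro u hu
      exact hy fun z hz => hu (Set.image_mono (f := φ) hAB hz)
    · intro h a ha
      have hφa : φ a ∈ sharp φ A := by
        intro u hu
        exact hu ⟨a, ha, rfl⟩
      have hφa' := h hφa
      rw [← hB]
      intro u hu
      have : φ u ∈ upperBounds (φ '' B) := by
        rintro _ ⟨b, hb, rfl⟩
        exact (hφ b u).mpr (hu hb)
      exact (hφ a u).mp (hφa' this)
  refine ⟨key, ?_⟩
  intro A hA B hB h
  exact Set.Subset.antisymm ((key A B hA hB).mpr h.subset)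
    ((key B A hB hA).mpr h.superset)
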